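/- Let (G'',H'') = altan²(G,H) with |H| = h even, with perimeter vertices x'_1,...,x'_h, y'_1,...,y'_h of the outermost cycle (so that N(x'_i) = {y'_{i-1}, y_i, y'_i}, indices mod h). If q is a kernel eigenvector of G'', then q(x'_i) = 0 for all 1 ≤ i ≤ h. -/

import Mathlib

open scoped Classical

/-- The nullity of a graph: dimension of the kernel of its real adjacency matrix. -/
noncomputable def nullity {V : Type*} [Fintype V] (G : SimpleGraph V) : ℕ :=
  letI := Classical.decEq V
  letI := Classical.decRel G.Adj
  Module.finrank ℝ ↥(LinearMap.ker (Matrix.toLin' (G.adjMatrix ℝ)))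

/-- `q` is a kernel eigenvector of `G`: the sum of `q` over each neighbourhood is `0`. -/
def IsKernelVector {V : Type*} [Fintype V] (G : SimpleGraph V) (q : V → ℝ) : Prop :=
  ∀ v : V, ∑ u : V, (if G.Adj v u then q u else 0) = 0

/-- Underlying relation of the altan construction: vertices are `V ⊕ (Fin h ⊕ Fin h)`,
where `Sum.inr (Sum.inl i)` is `x_{i+1}` and `Sum.inr (Sum.inr i)` is `y_{i+1}`
(0-indexed versions of the 1-indexed `x_i, y_i`). -/
def altanRel {V : Type*} {h : ℕ} [NeZero h] (G : SimpleGraph V) (H : Fin h → V) :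
    (V ⊕ (Fin h ⊕ Fin h)) → (V ⊕ (Fin h ⊕ Fin h)) → Prop
  | Sum.inl u, Sum.inl w => G.Adj u w
  | Sum.inl u, Sum.inr (Sum.inl i) => u = H i
  | Sum.inr (Sum.inl i), Sum.inr (Sum.inr j) => j = i ∨ i = j + 1
  | _, _ => False

/-- The altan of `(G, H)`. -/
def altan {V : Type*} {h : ℕ} [NeZero h] (G : SimpleGraph V) (H : Fin h → V) :
    SimpleGraph (V ⊕ (Fin h ⊕ Fin h)) :=
  SimpleGraph.fromRel (altanRel G H)

/-- The special vector: `s(y_i) = (-1)^i` (1-indexed), `0` elsewhere. -/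
def specialVector (V : Type*) (h : ℕ) : (V ⊕ (Fin h ⊕ Fin h)) → ℝ
  | Sum.inr (Sum.inr j) => (-1 : ℝ) ^ ((j : ℕ) + 1)
  | _ => 0

/-- The induced attachment set `H' = (y_1, ..., y_h)` of the altan. -/
def inducedAttachment (V : Type*) (h : ℕ) : Fin h → (V ⊕ (Fin h ⊕ Fin h)) :=
  fun i => Sum.inr (Sum.inr i)

open Fin.NatCast

/-- for even attachment size, a kernel eigenvector of the second iterated
altan vanishes on all outermost perimeter vertices `x'_i`. -/
theorem stmt14 {V : Type*} [Fintype V] {h : ℕ} [NeZero h] (hh : 2 ≤ h) (heven : Even h)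
    (G : SimpleGraph V) (H : Fin h → V)
    (q : ((V ⊕ (Fin h ⊕ Fin h)) ⊕ (Fin h ⊕ Fin h)) → ℝ)
    (hq : IsKernelVector (altan (altan G H) (inducedAttachment V h)) q) :
    ∀ i : Fin h, q (Sum.inr (Sum.inl i)) = 0 := by
  have hone : ((1 : Fin h) : ℕ) = 1 := by
    rw [Fin.val_one']; exact Nat.mod_eq_of_lt (by omega)
  have hne : ∀ j : Fin h, j ≠ j + 1 := by
    intro j hcon
    have h1 : j + 0 = j + 1 := by rw [add_zero]; exact hcon
    have h0 : (0 : Fin h) = 1 := add_left_cancel h1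
    have := congrArg Fin.val h0
    simp [hone] at this
    omega
  -- Equation from the kernel condition at y'_j
  have keyA : ∀ j : Fin h,
      q (Sum.inr (Sum.inl j)) + q (Sum.inr (Sum.inl (j + 1))) = 0 := by
    intro j
    have hsum := hq (Sum.inr (Sum.inr j))
    have hpt : ∀ u : ((V ⊕ (Fin h ⊕ Fin h)) ⊕ (Fin h ⊕ Fin h)),
        (if (altan (altan G H) (inducedAttachment V h)).Adj (Sum.inr (Sum.inr j)) u
          then q u else 0)
        = (if u = Sum.inr (Sum.inl j) then q u else 0)
          + (if u = Sum.inr (Sum.inl (j + 1)) then q u else 0) := by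
      rintro (a | (i | k))
      · simp [altan, SimpleGraph.fromRel_adj, altanRel]
      · have : (altan (altan G H) (inducedAttachment V h)).Adj
            (Sum.inr (Sum.inr j)) (Sum.inr (Sum.inl i)) ↔ (i = j ∨ i = j + 1) := by
          simp [altan, SimpleGraph.fromRel_adj, altanRel, eq_comm]
        rw [this]
        by_cases h1 : i = j <;> by_cases h2 : i = j + 1 <;>
          simp_all [hne j]
      · simp [altan, SimpleGraph.fromRel_adj, altanRel]
    rw [Finset.sum_congr rfl (fun u _ => hpt u), Finset.sum_add_distrib] at hsum
    simpa using hsum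
  -- Equation from the kernel condition at y_i
  have keyB : ∀ i : Fin h,
      q (Sum.inl (Sum.inr (Sum.inl i))) + q (Sum.inl (Sum.inr (Sum.inl (i + 1))))
        + q (Sum.inr (Sum.inl i)) = 0 := by
    intro i
    have hsum := hq (Sum.inl (Sum.inr (Sum.inr i)))
    have hpt : ∀ u : ((V ⊕ (Fin h ⊕ Fin h)) ⊕ (Fin h ⊕ Fin h)),
        (if (altan (altan G H) (inducedAttachment V h)).Adj (Sum.inl (Sum.inr (Sum.inr i))) u
          then q u else 0)
        = (if u = Sum.inl (Sum.inr (Sum.inl i)) then q u else 0)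
          + (if u = Sum.inl (Sum.inr (Sum.inl (i + 1))) then q u else 0)
          + (if u = Sum.inr (Sum.inl i) then q u else 0) := by
      rintro ((v | (k | k)) | (k | k))
      · simp [altan, SimpleGraph.fromRel_adj, altanRel]
      · have : (altan (altan G H) (inducedAttachment V h)).Adj
            (Sum.inl (Sum.inr (Sum.inr i))) (Sum.inl (Sum.inr (Sum.inl k)))
            ↔ (k = i ∨ k = i + 1) := by
          simp [altan, SimpleGraph.fromRel_adj, altanRel, eq_comm]
        rw [this]
        by_cases h1 : k = i <;> by_cases h2 : k = i + 1 <;>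
          simp_all [hne i]
      · simp [altan, SimpleGraph.fromRel_adj, altanRel, hne]
      · have : (altan (altan G H) (inducedAttachment V h)).Adj
            (Sum.inl (Sum.inr (Sum.inr i))) (Sum.inr (Sum.inl k)) ↔ k = i := by
          simp [altan, SimpleGraph.fromRel_adj, altanRel, inducedAttachment, eq_comm]
        rw [this]
        by_cases h1 : k = i <;> simp_all
      · simp [altan, SimpleGraph.fromRel_adj, altanRel, inducedAttachment]
    rw [Finset.sum_congr rfl (fun u _ => hpt u), Finset.sum_add_distrib,
      Finset.sum_add_distrib] at hsum
    simpa using hsum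
  -- Pass to ℕ-indexed sequences
  set a : ℕ → ℝ := fun n => q (Sum.inr (Sum.inl ((n : Fin h)))) with ha_def
  set b : ℕ → ℝ := fun n => q (Sum.inl (Sum.inr (Sum.inl ((n : Fin h))))) with hb_def
  have hcast : ∀ n : ℕ, ((n + 1 : ℕ) : Fin h) = (n : Fin h) + 1 := by
    intro n; push_cast; ring
  have ha : ∀ n, a (n + 1) = - a n := by
    intro n
    have := keyA (n : Fin h)
    simp only [ha_def, hcast]
    linarith
  have hb : ∀ n, b (n + 1) = - b n - a n := by
    intro n
    have := keyB (n : Fin h)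
    simp only [ha_def, hb_def, hcast]
    linarith
  have han : ∀ n, a n = (-1 : ℝ) ^ n * a 0 := by
    intro n
    induction n with
    | zero => simp
    | succ n ih => rw [ha n, ih]; ring
  have hbn : ∀ n, b n = (-1 : ℝ) ^ n * (b 0 + n * a 0) := by
    intro n
    induction n with
    | zero => simp
    | succ n ih =>
      rw [hb n, ih, han n]
      push_cast
      ring
  have hper : b h = b 0 := by
    simp only [hb_def]
    norm_cast
    rw [Fin.natCast_self]
  have hpow : (-1 : ℝ) ^ h = 1 := heven.neg_one_pow
  have ha0 : a 0 = 0 := by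
    have := hbn h
    rw [hper, hpow] at this
    have hh0 : (h : ℝ) ≠ 0 := by
      exact_mod_cast Nat.pos_of_ne_zero (NeZero.ne h) |>.ne'
    have : (h : ℝ) * a 0 = 0 := by linarith
    exact (mul_eq_zero.mp this).resolve_left hh0
  intro i
  have : a (i : ℕ) = 0 := by rw [han, ha0, mul_zero]
  simpa [ha_def, Fin.cast_val_eq_self] using this
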